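/- Let $m \geq 4$ be an integer and define $f_V(t) := \frac{1}{\sqrt{m}}\,\frac{\Gamma(m/2)}{\Gamma(1/2)\Gamma((m-1)/2)}\,(1 - t^2/m)^{(m-3)/2}$ for $|t| \leq \sqrt{m}$ and $f_V(t) := 0$ otherwise (this is the density of $\sum_{i=1}^m Z_i/\sqrt{\sum_{i=1}^m Z_i^2}$ for i.i.d. standard normal $Z_i$). Then $f_V(t) \leq \phi(t)$ for all $t$ with $t^2 \geq 6m/(m-3)$, where $\phi(t) = \frac{1}{\sqrt{2\pi}}e^{-t^2/2}$ is the standard normal density. -/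
import Mathlib
open Real

lemma log_le_aux {u : ℝ} (hu0 : 0 ≤ u) (hu1 : u < 1) :
    Real.log (1 - u) ≤ -(u + u ^ 2 / 2) := by
  have habs : |u| < 1 := by rwa [abs_of_nonneg hu0]
  have hs := hasSum_pow_div_log_of_abs_lt_one habs
  have h2 := sum_le_hasSum (Finset.range 2)
    (fun i _ => by positivity) hs
  simp [Finset.sum_range_succ] at h2
  nlinarith [h2]

lemma gautschi_aux {x : ℝ} (hx : 0 < x) :
    Real.Gamma (x + 1/2) ≤ Real.sqrt x * Real.Gamma x := by
  have hA : 0 < Real.Gamma x := Real.Gamma_pos_of_pos hx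
  have hB : 0 < Real.Gamma (x + 1) := Real.Gamma_pos_of_pos (by linarith)
  have hc := Real.convexOn_log_Gamma.2 (Set.mem_Ioi.2 hx)
    (Set.mem_Ioi.2 (show (0:ℝ) < x + 1 by linarith))
    (by norm_num : (0:ℝ) ≤ (1/2:ℝ)) (by norm_num : (0:ℝ) ≤ (1/2:ℝ)) (by norm_num)
  simp only [smul_eq_mul, Function.comp] at hc
  have harg : (1/2 : ℝ) * x + (1/2 : ℝ) * (x + 1) = x + 1/2 := by ring
  rw [harg] at hc
  have hAB : Real.log (Real.sqrt x * Real.Gamma x)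
      = 1/2 * Real.log (Real.Gamma x) + 1/2 * Real.log (Real.Gamma (x+1)) := by
    rw [Real.Gamma_add_one hx.ne', Real.log_mul (Real.sqrt_pos.2 hx).ne' hA.ne',
      Real.log_mul hx.ne' hA.ne', Real.log_sqrt hx.le]
    ring
  have := hc.trans_eq hAB.symm
  have hpos : 0 < Real.Gamma (x + 1/2) := Real.Gamma_pos_of_pos (by linarith)
  have hpos2 : 0 < Real.sqrt x * Real.Gamma x := by positivity
  exact (Real.log_le_log_iff hpos hpos2).1 this

theorem selfnormalized_density_le_gaussian
    (m : ℕ) (hm : 4 ≤ m)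
    (fV : ℝ → ℝ)
    (hfV : ∀ t : ℝ, fV t =
      if |t| ≤ Real.sqrt m then
        (1 / Real.sqrt m) *
          (Real.Gamma ((m : ℝ) / 2) /
            (Real.Gamma (1 / 2) * Real.Gamma (((m : ℝ) - 1) / 2))) *
          (1 - t ^ 2 / (m : ℝ)) ^ (((m : ℝ) - 3) / 2)
      else 0)
    (t : ℝ) (ht : t ^ 2 ≥ 6 * (m : ℝ) / ((m : ℝ) - 3)) :
    fV t ≤ (1 / Real.sqrt (2 * Real.pi)) * Real.exp (-t ^ 2 / 2) := by
  have hm4 : (4:ℝ) ≤ (m:ℝ) := by exact_mod_cast hm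
  have hm0 : (0:ℝ) < (m:ℝ) := by linarith
  rw [hfV t]
  split_ifs with h
  · -- main case
    have ht2 : t ^ 2 ≤ (m:ℝ) := by
      have h1 : |t| ^ 2 ≤ Real.sqrt (m:ℝ) ^ 2 := pow_le_pow_left₀ (abs_nonneg t) h 2
      rwa [sq_abs, Real.sq_sqrt hm0.le] at h1
    have hΓ2 : 0 < Real.Gamma (((m:ℝ) - 1) / 2) := Real.Gamma_pos_of_pos (by linarith)
    -- constant bound
    have hG := gautschi_aux (x := ((m:ℝ) - 1)/2) (by linarith)
    have harg : ((m:ℝ) - 1)/2 + 1/2 = (m:ℝ)/2 := by ring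
    rw [harg] at hG
    have hsπ : 0 < Real.sqrt π := Real.sqrt_pos.2 Real.pi_pos
    have hsm : 0 < Real.sqrt (m:ℝ) := Real.sqrt_pos.2 hm0
    have hC : (1 / Real.sqrt (m:ℝ)) *
        (Real.Gamma ((m : ℝ) / 2) /
          (Real.Gamma (1 / 2) * Real.Gamma (((m : ℝ) - 1) / 2)))
        ≤ 1 / Real.sqrt (2 * π) := by
      rw [Real.Gamma_one_half_eq]
      have step1 : Real.Gamma ((m : ℝ) / 2) /
          (Real.sqrt π * Real.Gamma (((m : ℝ) - 1) / 2))
          ≤ Real.sqrt (((m:ℝ) - 1)/2) / Real.sqrt π := by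
        rw [div_le_div_iff₀ (by positivity) hsπ]
        calc Real.Gamma ((m : ℝ) / 2) * Real.sqrt π
            ≤ (Real.sqrt (((m:ℝ) - 1)/2) * Real.Gamma (((m : ℝ) - 1) / 2)) * Real.sqrt π :=
              mul_le_mul_of_nonneg_right hG hsπ.le
          _ = Real.sqrt (((m:ℝ) - 1)/2) * (Real.sqrt π * Real.Gamma (((m : ℝ) - 1) / 2)) := by
              ring
      have step2 : (1 / Real.sqrt (m:ℝ)) * (Real.sqrt (((m:ℝ) - 1)/2) / Real.sqrt π)
          ≤ 1 / Real.sqrt (2 * π) := by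
        rw [Real.sqrt_mul (by norm_num : (0:ℝ) ≤ 2), div_mul_div_comm,
          div_le_div_iff₀ (by positivity) (by positivity)]
        have e1 : Real.sqrt (((m:ℝ) - 1)/2) * Real.sqrt 2 = Real.sqrt ((m:ℝ) - 1) := by
          rw [← Real.sqrt_mul (by linarith : (0:ℝ) ≤ ((m:ℝ) - 1)/2)]
          congr 1; ring
        have e2 : Real.sqrt ((m:ℝ) - 1) ≤ Real.sqrt (m:ℝ) :=
          Real.sqrt_le_sqrt (by linarith)
        have e3 : Real.sqrt ((m:ℝ) - 1) * Real.sqrt π ≤ Real.sqrt (m:ℝ) * Real.sqrt π :=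
          mul_le_mul_of_nonneg_right e2 hsπ.le
        calc 1 * Real.sqrt (((m:ℝ) - 1)/2) * (Real.sqrt 2 * Real.sqrt π)
            = Real.sqrt (((m:ℝ) - 1)/2) * Real.sqrt 2 * Real.sqrt π := by ring
          _ = Real.sqrt ((m:ℝ) - 1) * Real.sqrt π := by rw [e1]
          _ ≤ Real.sqrt (m:ℝ) * Real.sqrt π := e3
          _ = 1 * (Real.sqrt (m:ℝ) * Real.sqrt π) := by ring
      calc (1 / Real.sqrt (m:ℝ)) *
          (Real.Gamma ((m : ℝ) / 2) /
            (Real.sqrt π * Real.Gamma (((m : ℝ) - 1) / 2)))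
          ≤ (1 / Real.sqrt (m:ℝ)) * (Real.sqrt (((m:ℝ) - 1)/2) / Real.sqrt π) := by
            apply mul_le_mul_of_nonneg_left step1 (by positivity)
        _ ≤ 1 / Real.sqrt (2 * π) := step2
    -- exponent bound
    have hE : (1 - t ^ 2 / (m : ℝ)) ^ (((m : ℝ) - 3) / 2) ≤ Real.exp (-t ^ 2 / 2) := by
      set u : ℝ := t ^ 2 / (m:ℝ) with hu
      have hu0 : 0 ≤ u := by positivity
      have hu1 : u ≤ 1 := by rw [hu, div_le_one hm0]; exact ht2
      have ha : 0 < ((m:ℝ) - 3) / 2 := by linarith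
      rcases eq_or_lt_of_le hu1 with heq | hlt
      · rw [show (1 : ℝ) - u = 0 by rw [← heq]; ring, Real.zero_rpow ha.ne']
        positivity
      · have hb : 0 < 1 - u := by linarith
        rw [Real.rpow_def_of_pos hb, Real.exp_le_exp]
        have hlog := log_le_aux hu0 hlt
        have h6 : 6 * (m:ℝ) ≤ t ^ 2 * ((m:ℝ) - 3) := by
          rw [ge_iff_le, div_le_iff₀ (by linarith : (0:ℝ) < (m:ℝ) - 3)] at ht
          linarith
        have step : Real.log (1 - u) * (((m:ℝ) - 3) / 2)
            ≤ -(u + u ^ 2 / 2) * (((m:ℝ) - 3) / 2) :=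
          mul_le_mul_of_nonneg_right hlog ha.le
        refine step.trans ?_
        rw [hu]
        have key : t ^ 2 * (6 * (m:ℝ)) ≤ t ^ 2 * (t ^ 2 * ((m:ℝ) - 3)) :=
          mul_le_mul_of_nonneg_left h6 (sq_nonneg t)
        have e : (t ^ 2 / (m:ℝ) + (t ^ 2 / (m:ℝ)) ^ 2 / 2) * (((m:ℝ) - 3) / 2)
            = (2 * (m:ℝ) * t ^ 2 * ((m:ℝ) - 3) + t ^ 4 * ((m:ℝ) - 3)) / (4 * (m:ℝ) ^ 2) := by
          field_simp
          ring
        have goal2 : t ^ 2 / 2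
            ≤ (t ^ 2 / (m:ℝ) + (t ^ 2 / (m:ℝ)) ^ 2 / 2) * (((m:ℝ) - 3) / 2) := by
          rw [e, le_div_iff₀ (by positivity)]
          nlinarith [key]
        linarith [goal2]
    have hbase : 0 ≤ 1 - t ^ 2 / (m : ℝ) := by
      rw [sub_nonneg, div_le_one hm0]; exact ht2
    have hP : 0 ≤ (1 - t ^ 2 / (m : ℝ)) ^ (((m : ℝ) - 3) / 2) :=
      Real.rpow_nonneg hbase _
    exact mul_le_mul hC hE hP (by positivity)
  · positivity
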